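/- arXiv:2508.03867 — 4 statements merged into one kernel-verified Lean document; each statement's English description precedes it below -/
import Mathlib

section
/- Let A_1, A_2 be activation patterns of a deep ReLU network without biases, and set r_i = min_{1 ≤ ℓ ≤ L−1} Σ_j (A_i)^ℓ_j. Let n_min = min_{1 ≤ ℓ ≤ L−1} n_ℓ, ℓ_min^+ = max{ℓ ∈ [L−1] : n_ℓ = n_min}, and ℓ_min^− = min{ℓ ∈ [L−1] : n_ℓ = n_min}. Let R_i denote the set of A_i-active paths, S = R_1 ∩ R_2, let r_a be the maximum over all real θ of rank(N_{R_1∖S}(θ)), let r_b be the maximum over all real θ of rank(N_{R_2∖S}(θ)), and set t = r_a + r_b. Then for every real θ: (1) rank(M_{A_1}(θ)) ≤ r_1; (2) rank(M_{A_2}(θ)) ≤ r_2; (3a) if (A_1)^ℓ = (A_2)^ℓ for all ℓ with ℓ_min^+ < ℓ ≤ L−1, then the horizontal concatenation [M_{A_1}(θ) | M_{A_2}(θ)] has rank at most n_min; (3b) if (A_1)^ℓ = (A_2)^ℓ for all ℓ with 1 ≤ ℓ < ℓ_min^−, then the vertical concatenation [M_{A_1}(θ) ; M_{A_2}(θ)]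 has rank at most n_min; (4) rank(M_{A_1}(θ) − M_{A_2}(θ)) ≤ t. -/
noncomputable section

def maskMat (n : ℕ → ℕ) (A : (ℓ : ℕ) → Fin (n ℓ) → Bool) (ℓ : ℕ) :
    Matrix (Fin (n ℓ)) (Fin (n ℓ)) ℝ :=
  Matrix.diagonal (fun i => if A ℓ i then (1 : ℝ) else 0)

def preM (n : ℕ → ℕ) (A : (ℓ : ℕ) → Fin (n ℓ) → Bool)
    (W : (ℓ : ℕ) → Matrix (Fin (n (ℓ + 1))) (Fin (n ℓ)) ℝ) :
    (ℓ : ℕ) → Matrix (Fin (n ℓ)) (Fin (n 0)) ℝ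
  | 0 => 1
  | ℓ + 1 => maskMat n A (ℓ + 1) * (W ℓ * preM n A W ℓ)

/-- The masked matrix `M_A(θ)` of an `L`-layer ReLU network without biases. -/
def maskedMatrix (n : ℕ → ℕ) (A : (ℓ : ℕ) → Fin (n ℓ) → Bool)
    (W : (ℓ : ℕ) → Matrix (Fin (n (ℓ + 1))) (Fin (n ℓ)) ℝ) :
    (L : ℕ) → Matrix (Fin (n L)) (Fin (n 0)) ℝ
  | 0 => 1
  | L + 1 => W L * preM n A W L

/-- The number of active neurons `Σ_i A^ℓ_i` at layer `ℓ`. -/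
def activeCard (n : ℕ → ℕ) (A : (ℓ : ℕ) → Fin (n ℓ) → Bool) (ℓ : ℕ) : ℕ :=
  (Finset.univ.filter fun i : Fin (n ℓ) => A ℓ i = true).card

/-- A path `p = (p_1, …, p_{L-1})` through the hidden layers (`L = K + 1`). -/
abbrev NPath (n : ℕ → ℕ) (K : ℕ) : Type := ∀ ℓ : Fin K, Fin (n (ℓ.1 + 1))

/-- A path extended by the output unit `i`. -/
def extPath (n : ℕ → ℕ) {K : ℕ} (i : Fin (n (K + 1))) (p : NPath n K) :
    ∀ ℓ : Fin (K + 1), Fin (n (ℓ.1 + 1)) :=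
  Fin.lastCases (motive := fun ℓ : Fin (K + 1) => Fin (n (ℓ.1 + 1))) i (fun ℓ => p ℓ)

/-- The product of the weights along a path `p` from input `j` to output `i`. -/
def pathTerm (n : ℕ → ℕ) {K : ℕ}
    (W : (ℓ : ℕ) → Matrix (Fin (n (ℓ + 1))) (Fin (n ℓ)) ℝ)
    (i : Fin (n (K + 1))) (j : Fin (n 0)) (p : NPath n K) : ℝ :=
  W 0 (extPath n i p ⟨0, Nat.succ_pos K⟩) j *
    ∏ ℓ : Fin K, W (ℓ.1 + 1) (extPath n i p ℓ.succ) (p ℓ)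

/-- The path `p` is `A`-active. -/
def IsActivePath (n : ℕ → ℕ) (A : (ℓ : ℕ) → Fin (n ℓ) → Bool) {K : ℕ}
    (p : NPath n K) : Prop :=
  ∀ ℓ : Fin K, A (ℓ.1 + 1) (p ℓ) = true

/-- The finite set of `A`-active paths. -/
noncomputable def activePaths (n : ℕ → ℕ) (A : (ℓ : ℕ) → Fin (n ℓ) → Bool) (K : ℕ) :
    Finset (NPath n K) :=
  @Finset.filter _ (fun p => IsActivePath n A p) (Classical.decPred _) Finset.univ

/-- The path matrix `N_P(θ)` associated with a set `P` of paths. -/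
noncomputable def pathMatrix (n : ℕ → ℕ) {K : ℕ} (P : Finset (NPath n K))
    (W : (ℓ : ℕ) → Matrix (Fin (n (ℓ + 1))) (Fin (n ℓ)) ℝ) :
    Matrix (Fin (n (K + 1))) (Fin (n 0)) ℝ :=
  Matrix.of fun i j => ∑ p ∈ P, pathTerm n W i j p

namespace Statement11Aux

variable (n : ℕ → ℕ)

/-- Product of masked layers from `ℓ` up to `ℓ + d`. -/
def postM (A : (ℓ : ℕ) → Fin (n ℓ) → Bool)
    (W : (ℓ : ℕ) → Matrix (Fin (n (ℓ + 1))) (Fin (n ℓ)) ℝ) (ℓ : ℕ) :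
    (d : ℕ) → Matrix (Fin (n (ℓ + d))) (Fin (n ℓ)) ℝ
  | 0 => (1 : Matrix (Fin (n ℓ)) (Fin (n ℓ)) ℝ)
  | d + 1 => maskMat n A (ℓ + d + 1) * (W (ℓ + d) * postM A W ℓ d)

lemma preM_add (A : (ℓ : ℕ) → Fin (n ℓ) → Bool)
    (W : (ℓ : ℕ) → Matrix (Fin (n (ℓ + 1))) (Fin (n ℓ)) ℝ) (ℓ d : ℕ) :
    preM n A W (ℓ + d) = postM n A W ℓ d * preM n A W ℓ := by
  induction d with
  | zero => simp [postM]
  | succ d ih =>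
    show preM n A W ((ℓ + d) + 1) = _
    rw [preM, ih]
    simp [postM, Matrix.mul_assoc]

lemma maskMat_congr (A₁ A₂ : (ℓ : ℕ) → Fin (n ℓ) → Bool) (m : ℕ)
    (h : ∀ i, A₁ m i = A₂ m i) : maskMat n A₁ m = maskMat n A₂ m := by
  have : (fun i => if A₁ m i then (1 : ℝ) else 0) = fun i => if A₂ m i then (1 : ℝ) else 0 :=
    funext fun i => by rw [h i]
  rw [maskMat, maskMat, this]

lemma postM_congr (A₁ A₂ : (ℓ : ℕ) → Fin (n ℓ) → Bool)
    (W : (ℓ : ℕ) → Matrix (Fin (n (ℓ + 1))) (Fin (n ℓ)) ℝ) (ℓ d : ℕ)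
    (h : ∀ m, ℓ < m → m ≤ ℓ + d → ∀ i, A₁ m i = A₂ m i) :
    postM n A₁ W ℓ d = postM n A₂ W ℓ d := by
  induction d with
  | zero => rfl
  | succ d ih =>
    rw [postM, postM, ih fun m h1 h2 i => h m h1 (h2.trans (by omega)) i,
      maskMat_congr n A₁ A₂ (ℓ + d + 1) (h _ (by omega) (by omega))]

lemma preM_congr (A₁ A₂ : (ℓ : ℕ) → Fin (n ℓ) → Bool)
    (W : (ℓ : ℕ) → Matrix (Fin (n (ℓ + 1))) (Fin (n ℓ)) ℝ) (ℓ : ℕ)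
    (h : ∀ m, 1 ≤ m → m ≤ ℓ → ∀ i, A₁ m i = A₂ m i) :
    preM n A₁ W ℓ = preM n A₂ W ℓ := by
  induction ℓ with
  | zero => rfl
  | succ ℓ ih =>
    rw [preM, preM, ih fun m h1 h2 i => h m h1 (by omega) i,
      maskMat_congr n A₁ A₂ (ℓ + 1) (h _ (by omega) (by omega))]

lemma rank_maskMat (A : (ℓ : ℕ) → Fin (n ℓ) → Bool) (ℓ : ℕ) :
    (maskMat n A ℓ).rank = activeCard n A ℓ := by
  classical
  rw [maskMat, Matrix.rank_diagonal, activeCard, Fintype.card_subtype]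
  congr 1
  apply Finset.filter_congr
  intro i _
  by_cases h : A ℓ i <;> simp [h]

lemma rank_masked_le (A : (ℓ : ℕ) → Fin (n ℓ) → Bool)
    (W : (ℓ : ℕ) → Matrix (Fin (n (ℓ + 1))) (Fin (n ℓ)) ℝ) (ℓ K : ℕ)
    (h1 : 1 ≤ ℓ) (h2 : ℓ ≤ K) :
    (maskedMatrix n A W (K + 1)).rank ≤ activeCard n A ℓ := by
  obtain ⟨d, rfl⟩ := Nat.exists_eq_add_of_le h2
  obtain ⟨ℓ', rfl⟩ : ∃ ℓ', ℓ = ℓ' + 1 := ⟨ℓ - 1, by omega⟩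
  rw [maskedMatrix, preM_add n A W (ℓ' + 1) d]
  calc (W (ℓ' + 1 + d) * (postM n A W (ℓ' + 1) d * preM n A W (ℓ' + 1))).rank
      ≤ (postM n A W (ℓ' + 1) d * preM n A W (ℓ' + 1)).rank :=
        Matrix.rank_mul_le_right _ _
    _ ≤ (preM n A W (ℓ' + 1)).rank := Matrix.rank_mul_le_right _ _
    _ ≤ (maskMat n A (ℓ' + 1)).rank := by
        rw [preM]; exact Matrix.rank_mul_le_left _ _
    _ = activeCard n A (ℓ' + 1) := rank_maskMat n A _

lemma extPath_snoc {K : ℕ} (i : Fin (n (K + 2))) (k : Fin (n (K + 1))) (p : NPath n K) :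
    extPath n i (Fin.snoc (α := fun ℓ : Fin (K + 1) => Fin (n (ℓ.1 + 1))) p k) =
      Fin.snoc (α := fun ℓ : Fin (K + 2) => Fin (n (ℓ.1 + 1))) (extPath n k p) i := by
  funext ℓ
  refine Fin.lastCases ?_ (fun m => ?_) ℓ
  · simp [extPath]
  · simp only [extPath, Fin.lastCases_castSucc, Fin.snoc_castSucc]
    refine Fin.lastCases ?_ (fun m' => ?_) m
    · simp [extPath]
    · simp [extPath]

lemma pathTerm_snoc {K : ℕ}
    (W : (ℓ : ℕ) → Matrix (Fin (n (ℓ + 1))) (Fin (n ℓ)) ℝ)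
    (i : Fin (n (K + 2))) (j : Fin (n 0)) (k : Fin (n (K + 1))) (p : NPath n K) :
    pathTerm n W i j (Fin.snoc (α := fun ℓ : Fin (K + 1) => Fin (n (ℓ.1 + 1))) p k) =
      W (K + 1) i k * pathTerm n W k j p := by
  rw [pathTerm, pathTerm, extPath_snoc]
  rw [Fin.prod_univ_castSucc]
  have hfst : (Fin.snoc (α := fun ℓ : Fin (K + 2) => Fin (n (ℓ.1 + 1))) (extPath n k p) i)
      ⟨0, Nat.succ_pos (K + 1)⟩ = extPath n k p ⟨0, Nat.succ_pos K⟩ := by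
    show Fin.snoc (α := fun ℓ : Fin (K + 2) => Fin (n (ℓ.1 + 1))) (extPath n k p) i
        (Fin.castSucc ⟨0, Nat.succ_pos K⟩) = _
    rw [Fin.snoc_castSucc]
  rw [hfst]
  have hterm_last :
      W ((Fin.last K).1 + 1)
        (Fin.snoc (α := fun ℓ : Fin (K + 2) => Fin (n (ℓ.1 + 1))) (extPath n k p) i
          (Fin.last K).succ)
        ((Fin.snoc (α := fun ℓ : Fin (K + 1) => Fin (n (ℓ.1 + 1))) p k) (Fin.last K)) =
      W (K + 1) i k := by
    show W (K + 1)
        (Fin.snoc (α := fun ℓ : Fin (K + 2) => Fin (n (ℓ.1 + 1))) (extPath n k p) i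
          (Fin.last (K + 1)))
        ((Fin.snoc (α := fun ℓ : Fin (K + 1) => Fin (n (ℓ.1 + 1))) p k) (Fin.last K)) = _
    rw [Fin.snoc_last, Fin.snoc_last]
  rw [hterm_last]
  have hterm : ∀ ℓ : Fin K,
      W ((Fin.castSucc ℓ).1 + 1)
        (Fin.snoc (α := fun ℓ : Fin (K + 2) => Fin (n (ℓ.1 + 1))) (extPath n k p) i
          (Fin.castSucc ℓ).succ)
        ((Fin.snoc (α := fun ℓ : Fin (K + 1) => Fin (n (ℓ.1 + 1))) p k) (Fin.castSucc ℓ)) =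
      W (ℓ.1 + 1) (extPath n k p ℓ.succ) (p ℓ) := by
    intro ℓ
    show W (ℓ.1 + 1)
        (Fin.snoc (α := fun ℓ : Fin (K + 2) => Fin (n (ℓ.1 + 1))) (extPath n k p) i
          (Fin.castSucc ℓ.succ))
        ((Fin.snoc (α := fun ℓ : Fin (K + 1) => Fin (n (ℓ.1 + 1))) p k) (Fin.castSucc ℓ)) = _
    rw [Fin.snoc_castSucc, Fin.snoc_castSucc]
  rw [Finset.prod_congr rfl (fun ℓ _ => hterm ℓ)]
  ring

lemma isActivePath_snoc (A : (ℓ : ℕ) → Fin (n ℓ) → Bool) {K : ℕ}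
    (k : Fin (n (K + 1))) (p : NPath n K) :
    IsActivePath n A (Fin.snoc (α := fun ℓ : Fin (K + 1) => Fin (n (ℓ.1 + 1))) p k) ↔
      (A (K + 1) k = true ∧ IsActivePath n A p) := by
  constructor
  · intro h
    refine ⟨?_, fun ℓ => ?_⟩
    · have := h (Fin.last K)
      simpa using this
    · have := h (Fin.castSucc ℓ)
      simpa using this
  · rintro ⟨h1, h2⟩ ℓ
    refine Fin.lastCases ?_ (fun m => ?_) ℓ
    · simpa using h1
    · simpa using h2 m

lemma masked_eq_path (A : (ℓ : ℕ) → Fin (n ℓ) → Bool)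
    (W : (ℓ : ℕ) → Matrix (Fin (n (ℓ + 1))) (Fin (n ℓ)) ℝ) (K : ℕ) :
    maskedMatrix n A W (K + 1) = pathMatrix n (activePaths n A K) W := by
  classical
  have hpm : ∀ (K : ℕ) (P : Finset (NPath n K))
      (W : (ℓ : ℕ) → Matrix (Fin (n (ℓ + 1))) (Fin (n ℓ)) ℝ)
      (i : Fin (n (K + 1))) (j : Fin (n 0)),
      pathMatrix n P W i j = ∑ p ∈ P, pathTerm n W i j p := fun _ _ _ _ _ => rfl
  induction K with
  | zero =>
    ext i j
    have hterm : ∀ p : NPath n 0, pathTerm n W i j p = W 0 i j := by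
      intro p
      have hext : extPath n i p ⟨0, Nat.succ_pos 0⟩ = i := Fin.lastCases_last
      rw [pathTerm, hext]
      simp
    have hact : activePaths n A 0 = Finset.univ := by
      apply Finset.filter_true_of_mem
      intro p _ ℓ
      exact ℓ.elim0
    rw [hpm, hact, Finset.sum_congr rfl fun p _ => hterm p]
    show (W 0 * preM n A W 0) i j = _
    rw [preM, Matrix.mul_one]
    have : Fintype.card (NPath n 0) = 1 := by
      simp [NPath]
    simp [Finset.card_univ, this]
  | succ K ih =>
    ext i j
    have hinner : ∀ k, pathMatrix n (activePaths n A K) W k j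
        = ∑ p : NPath n K, (if IsActivePath n A p then pathTerm n W k j p else 0) := by
      intro k
      rw [hpm, activePaths, Finset.sum_filter]
    have hLHS : maskedMatrix n A W (K + 1 + 1) i j
        = ∑ k, ∑ p : NPath n K, W (K + 1) i k * ((if A (K + 1) k then (1 : ℝ) else 0) *
            (if IsActivePath n A p then pathTerm n W k j p else 0)) := by
      show (W (K + 1) * preM n A W (K + 1)) i j = _
      rw [preM]
      have hM : W K * preM n A W K = maskedMatrix n A W (K + 1) := rfl
      rw [hM, ih, maskMat, Matrix.mul_apply]
      refine Finset.sum_congr rfl fun k _ => ?_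
      rw [Matrix.diagonal_mul (d := fun i => if A (K + 1) i then (1 : ℝ) else 0)
        (M := pathMatrix n (activePaths n A K) W) k j]
      rw [hinner k, Finset.mul_sum, Finset.mul_sum]
    rw [hLHS, hpm, activePaths, Finset.sum_filter]
    rw [← Equiv.sum_comp (Fin.snocEquiv (fun ℓ : Fin (K + 1) => Fin (n (ℓ.1 + 1))))
      (fun p => if IsActivePath n A p then pathTerm n W i j p else 0)]
    rw [Fintype.sum_prod_type]
    refine (Finset.sum_congr rfl fun k _ => Finset.sum_congr rfl fun p _ => ?_).symm
    show (if IsActivePath n A (Fin.snoc p k) then pathTerm n W i j (Fin.snoc p k) else 0) =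
      W (K + 1) i k * ((if A (K + 1) k then (1 : ℝ) else 0) *
        (if IsActivePath n A p then pathTerm n W k j p else 0))
    rw [pathTerm_snoc]
    by_cases h1 : A (K + 1) k = true
    · by_cases h2 : IsActivePath n A p
      · rw [if_pos ((isActivePath_snoc n A k p).2 ⟨h1, h2⟩), if_pos h1, if_pos h2]
        ring
      · rw [if_neg (fun h => h2 ((isActivePath_snoc n A k p).1 h).2), if_neg h2]
        ring
    · rw [if_neg (fun h => h1 ((isActivePath_snoc n A k p).1 h).1), if_neg h1]
      ring

lemma rank_add_le {m' n' : Type*} [Fintype m'] [Fintype n'] (A B : Matrix m' n' ℝ) :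
    (A + B).rank ≤ A.rank + B.rank := by
  rw [Matrix.rank, Matrix.rank, Matrix.rank, Matrix.mulVecLin_add]
  have hle : LinearMap.range (A.mulVecLin + B.mulVecLin) ≤
      LinearMap.range A.mulVecLin ⊔ LinearMap.range B.mulVecLin := by
    rintro x ⟨y, rfl⟩
    exact Submodule.add_mem_sup ⟨y, rfl⟩ ⟨y, rfl⟩
  exact (Submodule.finrank_mono hle).trans
    (Submodule.finrank_add_le_finrank_add_finrank _ _)

lemma rank_neg {m' n' : Type*} [Fintype n'] (B : Matrix m' n' ℝ) :
    (-B).rank = B.rank := by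
  rw [Matrix.rank, Matrix.rank]
  have h : (-B).mulVecLin = -(B.mulVecLin) := by
    ext v
    simp [Matrix.neg_mulVec]
  rw [h, LinearMap.range_neg]

lemma rank_sub_le {m' n' : Type*} [Fintype m'] [Fintype n'] (A B : Matrix m' n' ℝ) :
    (A - B).rank ≤ A.rank + B.rank := by
  rw [sub_eq_add_neg]
  exact (rank_add_le A (-B)).trans (by rw [rank_neg])


lemma sum_sdiff_inter {α M : Type*} [DecidableEq α] [AddCommGroup M]
    (s t : Finset α) (f : α → M) :
    (∑ x ∈ s \ (s ∩ t), f x) - (∑ x ∈ t \ (s ∩ t), f x) =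
      (∑ x ∈ s, f x) - (∑ x ∈ t, f x) := by
  rw [← Finset.sum_sdiff (Finset.inter_subset_left (s₁ := s) (s₂ := t)),
    ← Finset.sum_sdiff (Finset.inter_subset_right (s₁ := s) (s₂ := t))]
  abel

end Statement11Aux

open Statement11Aux in
/-- Determinantal rank constraints for deep two-block ReLU pattern
varieties (`L = K + 1 ≥ 2`): with `r_i = min_{1 ≤ ℓ ≤ L-1} Σ_j (A_i)^ℓ_j`,
`n_min = min_{1 ≤ ℓ ≤ L-1} n_ℓ`, `ℓ_min^± ` the largest/smallest minimizing layer,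
`R_i` the set of `A_i`-active paths, `S = R_1 ∩ R_2`, and `r_a, r_b` the maximal
ranks of the path matrices of `R_1 ∖ S` and `R_2 ∖ S`, for every parameter `θ`:
(1) `rank M_{A_1}(θ) ≤ r_1`, (2) `rank M_{A_2}(θ) ≤ r_2`,
(3a) if `A_1, A_2` agree above `ℓ_min^+` then `rank [M_{A_1}(θ) | M_{A_2}(θ)] ≤ n_min`,
(3b) if `A_1, A_2` agree below `ℓ_min^−` then `rank [M_{A_1}(θ) ; M_{A_2}(θ)] ≤ n_min`,
(4) `rank (M_{A_1}(θ) − M_{A_2}(θ)) ≤ r_a + r_b`. -/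
theorem statement11 (n : ℕ → ℕ) (K : ℕ) (hK : 1 ≤ K)
    (A₁ A₂ : (ℓ : ℕ) → Fin (n ℓ) → Bool) (r₁ r₂ nmin ℓplus ℓminus ra rb : ℕ)
    (hr₁ : IsLeast ((fun ℓ => activeCard n A₁ ℓ) '' Set.Icc 1 K) r₁)
    (hr₂ : IsLeast ((fun ℓ => activeCard n A₂ ℓ) '' Set.Icc 1 K) r₂)
    (hnmin : IsLeast (n '' Set.Icc 1 K) nmin)
    (hplus : IsGreatest {ℓ | ℓ ∈ Set.Icc 1 K ∧ n ℓ = nmin} ℓplus)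
    (hminus : IsLeast {ℓ | ℓ ∈ Set.Icc 1 K ∧ n ℓ = nmin} ℓminus)
    (hra : IsGreatest
      (Set.range fun W : (ℓ : ℕ) → Matrix (Fin (n (ℓ + 1))) (Fin (n ℓ)) ℝ =>
        (pathMatrix n (activePaths n A₁ K \ (activePaths n A₁ K ∩ activePaths n A₂ K)) W).rank)
      ra)
    (hrb : IsGreatest
      (Set.range fun W : (ℓ : ℕ) → Matrix (Fin (n (ℓ + 1))) (Fin (n ℓ)) ℝ =>
        (pathMatrix n (activePaths n A₂ K \ (activePaths n A₁ K ∩ activePaths n A₂ K)) W).rank)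
      rb) :
    ∀ W : (ℓ : ℕ) → Matrix (Fin (n (ℓ + 1))) (Fin (n ℓ)) ℝ,
      (maskedMatrix n A₁ W (K + 1)).rank ≤ r₁ ∧
      (maskedMatrix n A₂ W (K + 1)).rank ≤ r₂ ∧
      ((∀ ℓ, ℓplus < ℓ → ℓ ≤ K → ∀ i : Fin (n ℓ), A₁ ℓ i = A₂ ℓ i) →
        (Matrix.fromCols (maskedMatrix n A₁ W (K + 1))
          (maskedMatrix n A₂ W (K + 1))).rank ≤ nmin) ∧
      ((∀ ℓ, 1 ≤ ℓ → ℓ < ℓminus → ∀ i : Fin (n ℓ), A₁ ℓ i = A₂ ℓ i) →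
        (Matrix.fromRows (maskedMatrix n A₁ W (K + 1))
          (maskedMatrix n A₂ W (K + 1))).rank ≤ nmin) ∧
      (maskedMatrix n A₁ W (K + 1) - maskedMatrix n A₂ W (K + 1)).rank ≤ ra + rb := by
  intro W
  obtain ⟨⟨hp1, hp2⟩, hpn⟩ := hplus.1
  obtain ⟨⟨hm1, hm2⟩, hmn⟩ := hminus.1
  refine ⟨?_, ?_, ?_, ?_, ?_⟩
  · obtain ⟨ℓ, hℓ, rfl⟩ := hr₁.1
    exact rank_masked_le n A₁ W ℓ K hℓ.1 hℓ.2
  · obtain ⟨ℓ, hℓ, rfl⟩ := hr₂.1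
    exact rank_masked_le n A₂ W ℓ K hℓ.1 hℓ.2
  · intro hagree
    obtain ⟨d, rfl⟩ := Nat.exists_eq_add_of_le hp2
    have hpost : postM n A₂ W ℓplus d = postM n A₁ W ℓplus d :=
      (postM_congr n A₁ A₂ W ℓplus d fun m h1 h2 i => hagree m h1 h2 i).symm
    have e1 : maskedMatrix n A₁ W (ℓplus + d + 1)
        = (W (ℓplus + d) * postM n A₁ W ℓplus d) * preM n A₁ W ℓplus := by
      rw [maskedMatrix, preM_add, Matrix.mul_assoc]
    have e2 : maskedMatrix n A₂ W (ℓplus + d + 1)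
        = (W (ℓplus + d) * postM n A₁ W ℓplus d) * preM n A₂ W ℓplus := by
      rw [maskedMatrix, preM_add, hpost, Matrix.mul_assoc]
    rw [e1, e2, ← Matrix.mul_fromCols]
    calc (((W (ℓplus + d) * postM n A₁ W ℓplus d)) *
          Matrix.fromCols (preM n A₁ W ℓplus) (preM n A₂ W ℓplus)).rank
        ≤ (W (ℓplus + d) * postM n A₁ W ℓplus d).rank := Matrix.rank_mul_le_left _ _
      _ ≤ Fintype.card (Fin (n ℓplus)) := Matrix.rank_le_card_width _
      _ = nmin := by rw [Fintype.card_fin, hpn]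
  · intro hagree
    obtain ⟨d, rfl⟩ := Nat.exists_eq_add_of_le hm2
    obtain ⟨ℓ', rfl⟩ : ∃ ℓ', ℓminus = ℓ' + 1 := ⟨ℓminus - 1, by omega⟩
    have hpre : preM n A₁ W ℓ' = preM n A₂ W ℓ' :=
      preM_congr n A₁ A₂ W ℓ' fun m h1 h2 i => hagree m h1 (by omega) i
    have e1 : maskedMatrix n A₁ W (ℓ' + 1 + d + 1)
        = (W (ℓ' + 1 + d) * (postM n A₁ W (ℓ' + 1) d * maskMat n A₁ (ℓ' + 1)))
            * (W ℓ' * preM n A₁ W ℓ') := by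
      rw [maskedMatrix, preM_add, preM]
      simp [Matrix.mul_assoc]
    have e2 : maskedMatrix n A₂ W (ℓ' + 1 + d + 1)
        = (W (ℓ' + 1 + d) * (postM n A₂ W (ℓ' + 1) d * maskMat n A₂ (ℓ' + 1)))
            * (W ℓ' * preM n A₁ W ℓ') := by
      rw [maskedMatrix, preM_add, preM, ← hpre]
      simp [Matrix.mul_assoc]
    rw [e1, e2, ← Matrix.fromRows_mul]
    calc (Matrix.fromRows
            (W (ℓ' + 1 + d) * (postM n A₁ W (ℓ' + 1) d * maskMat n A₁ (ℓ' + 1)))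
            (W (ℓ' + 1 + d) * (postM n A₂ W (ℓ' + 1) d * maskMat n A₂ (ℓ' + 1)))
          * (W ℓ' * preM n A₁ W ℓ')).rank
        ≤ (W ℓ' * preM n A₁ W ℓ').rank := Matrix.rank_mul_le_right _ _
      _ ≤ Fintype.card (Fin (n (ℓ' + 1))) := Matrix.rank_le_card_height _
      _ = nmin := by rw [Fintype.card_fin, hmn]
  · have key : maskedMatrix n A₁ W (K + 1) - maskedMatrix n A₂ W (K + 1)
        = pathMatrix n (activePaths n A₁ K \ (activePaths n A₁ K ∩ activePaths n A₂ K)) W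
          - pathMatrix n (activePaths n A₂ K \ (activePaths n A₁ K ∩ activePaths n A₂ K)) W := by
      rw [masked_eq_path, masked_eq_path]
      ext i j
      simp only [Matrix.sub_apply, pathMatrix, Matrix.of_apply]
      exact (sum_sdiff_inter (activePaths n A₁ K) (activePaths n A₂ K)
        (fun p => pathTerm n W i j p)).symm
    rw [key]
    calc (pathMatrix n (activePaths n A₁ K \ (activePaths n A₁ K ∩ activePaths n A₂ K)) W
          - pathMatrix n (activePaths n A₂ K \ (activePaths n A₁ K ∩ activePaths n A₂ K)) W).rank
        ≤ _ + _ := rank_sub_le _ _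
      _ ≤ ra + rb := add_le_add (hra.2 ⟨W, rfl⟩) (hrb.2 ⟨W, rfl⟩)
end
end

section
/- Let A_1, …, A_k ∈ {0,1}^{n_1} be activation patterns of a shallow ReLU network without biases. Then for every λ = (λ_1, …, λ_k) ∈ ℤ^k and every W^(1) ∈ ℝ^{n_1×n_0}, W^(2) ∈ ℝ^{n_2×n_1}, the matrix Σ_{i=1}^k λ_i · W^(2)·diag(A_i)·W^(1) has rank at most the number of indices j ∈ [n_1] with Σ_{i=1}^k λ_i (A_i)_j ≠ 0; consequently all ( |supp(Σ_i λ_i A_i)| + 1 )-minors of the matrix Σ_i λ_i M_i vanish on the image of the parametrization, i.e., belong to the pattern ideal J^A. -/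
noncomputable section

/-- The diagonal 0/1 mask matrix of an activation pattern of the hidden layer. -/
def diagPat (n₁ : ℕ) (A : Fin n₁ → Bool) : Matrix (Fin n₁) (Fin n₁) ℝ :=
  Matrix.diagonal (fun j => if A j then (1 : ℝ) else 0)

lemma rank_submatrix_le' {p q : ℕ} {m n : ℕ} (M : Matrix (Fin m) (Fin n) ℝ)
    (ρ : Fin p → Fin m) (γ : Fin q → Fin n) :
    (M.submatrix ρ γ).rank ≤ M.rank := by
  have h : M.submatrix ρ γ =
      (Matrix.of fun i j => if ρ i = j then (1 : ℝ) else 0) *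
        (M * Matrix.of fun j l => if γ l = j then (1 : ℝ) else 0) := by
    ext i l
    simp [Matrix.mul_apply, Finset.mul_sum, ite_and, mul_comm]
  rw [h]
  exact (Matrix.rank_mul_le_right _ _).trans (Matrix.rank_mul_le_left _ _)

/-- For a shallow ReLU network without biases with activation
patterns `A_1, …, A_k` and any `λ ∈ ℤ^k`, the matrix `Σ_i λ_i M_{A_i}(θ)` has rank at
most `|supp(Σ_i λ_i A_i)|`; consequently all `(|supp(Σ_i λ_i A_i)| + 1)`-minors of
`Σ_i λ_i M_i` vanish on the image of the parametrization. -/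
theorem statement12 (n₀ n₁ n₂ k : ℕ) (A : Fin k → Fin n₁ → Bool) (lam : Fin k → ℤ)
    (W₁ : Matrix (Fin n₁) (Fin n₀) ℝ) (W₂ : Matrix (Fin n₂) (Fin n₁) ℝ) :
    (∑ i, (lam i : ℝ) • (W₂ * diagPat n₁ (A i) * W₁)).rank ≤
      (Finset.univ.filter fun j : Fin n₁ =>
        (∑ i, lam i * (if A i j then (1 : ℤ) else 0)) ≠ 0).card ∧
    ∀ (ρ : Fin ((Finset.univ.filter fun j : Fin n₁ =>
          (∑ i, lam i * (if A i j then (1 : ℤ) else 0)) ≠ 0).card + 1) → Fin n₂)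
      (γ : Fin ((Finset.univ.filter fun j : Fin n₁ =>
          (∑ i, lam i * (if A i j then (1 : ℤ) else 0)) ≠ 0).card + 1) → Fin n₀),
      ((∑ i, (lam i : ℝ) • (W₂ * diagPat n₁ (A i) * W₁)).submatrix ρ γ).det = 0 := by
  set c : Fin n₁ → ℝ := fun j => ((∑ i, lam i * (if A i j then (1 : ℤ) else 0) : ℤ) : ℝ) with hc
  have key : (∑ i, (lam i : ℝ) • (W₂ * diagPat n₁ (A i) * W₁))
      = W₂ * Matrix.diagonal c * W₁ := by
    have : ∀ i, (lam i : ℝ) • (W₂ * diagPat n₁ (A i) * W₁)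
        = W₂ * ((lam i : ℝ) • diagPat n₁ (A i)) * W₁ := by
      intro i; rw [Matrix.mul_smul, Matrix.smul_mul]
    rw [Finset.sum_congr rfl fun i _ => this i, ← Matrix.sum_mul, ← Matrix.mul_sum]
    congr 1
    congr 1
    ext a b
    simp only [Matrix.sum_apply, diagPat, Matrix.smul_apply, Matrix.diagonal_apply, hc]
    by_cases hab : a = b
    · subst hab
      simp only [if_pos rfl]
      push_cast
      congr 1
    · simp [hab]
  have hcard : (Matrix.diagonal c).rank = (Finset.univ.filter fun j : Fin n₁ =>
      (∑ i, lam i * (if A i j then (1 : ℤ) else 0)) ≠ 0).card := by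
    rw [Matrix.rank_diagonal, Fintype.card_subtype]
    congr 1
    apply Finset.filter_congr
    intro j _
    simp only [hc, ne_eq, Int.cast_eq_zero]
  have hrank : (∑ i, (lam i : ℝ) • (W₂ * diagPat n₁ (A i) * W₁)).rank ≤
      (Finset.univ.filter fun j : Fin n₁ =>
        (∑ i, lam i * (if A i j then (1 : ℤ) else 0)) ≠ 0).card := by
    rw [key, ← hcard, Matrix.mul_assoc]
    exact (Matrix.rank_mul_le_right _ _).trans (Matrix.rank_mul_le_left _ _)
  refine ⟨hrank, fun ρ γ => ?_⟩
  by_contra h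
  have hu : IsUnit ((∑ i, (lam i : ℝ) • (W₂ * diagPat n₁ (A i) * W₁)).submatrix ρ γ) :=
    (Matrix.isUnit_iff_isUnit_det _).mpr (isUnit_iff_ne_zero.mpr h)
  have h1 := Matrix.rank_of_isUnit _ hu
  have h2 := (rank_submatrix_le' _ ρ γ).trans hrank
  rw [h1] at h2
  simp [Fintype.card_fin] at h2
end
end

section
/- Let A_1, …, A_k ∈ {0,1}^{n_1} be activation patterns of a shallow ReLU network without biases. Fix λ^(1), …, λ^(n) ∈ ℤ^k, set v_j = Σ_{i=1}^k λ^(j)_i A_i ∈ ℤ^{n_1}, t_j = supp(v_j) ⊆ [n_1], and T_j(θ) = Σ_{i=1}^k λ^(j)_i · W^(2)·diag(A_i)·W^(1). Assume that for each u ∈ ∩_{j=1}^n t_j the coefficient (v_j)_u is the same for all j ∈ [n]. Let α, β ≥ 1 and let f : [α]×[β] → [n] be an assignment such that whenever f(j_1,k_1) = f(j_2,k_2) with (j_1,k_1) ≠ (j_2,k_2), one has j_1 = j_2 or k_1 = k_2. Then for every real θ, the block matrix T(θ) ∈ ℝ^{α n_2 × β n_0} whose (j,k) block is T_{f(j,k)}(θ)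 satisfies rank(T(θ)) ≤ |∩_{j=1}^n t_j| + Σ_{j=1}^n |t_j ∖ ∩_{j'=1}^n t_{j'}|. -/
noncomputable section

/-- The linear combination `T_j(θ) = Σ_i λ^{(j)}_i M_{A_i}(θ)` of masked matrices of a
shallow ReLU network without biases. -/
def combT {n₀ n₁ n₂ k : ℕ} (A : Fin k → Fin n₁ → Bool) (lam : Fin k → ℤ)
    (W₁ : Matrix (Fin n₁) (Fin n₀) ℝ) (W₂ : Matrix (Fin n₂) (Fin n₁) ℝ) :
    Matrix (Fin n₂) (Fin n₀) ℝ :=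
  ∑ i, (lam i : ℝ) • (W₂ * diagPat n₁ (A i) * W₁)

/-- The integer vector `v_j = Σ_i λ^{(j)}_i A_i`. -/
def combV {n₁ k : ℕ} (A : Fin k → Fin n₁ → Bool) (lam : Fin k → ℤ) (u : Fin n₁) : ℤ :=
  ∑ i, lam i * (if A i u then (1 : ℤ) else 0)

/-- The support `t_j = supp(v_j)`. -/
def suppT {n₁ k : ℕ} (A : Fin k → Fin n₁ → Bool) (lam : Fin k → ℤ) : Finset (Fin n₁) :=
  Finset.univ.filter fun u => combV A lam u ≠ 0

lemma combT_apply {n₀ n₁ n₂ k : ℕ} (A : Fin k → Fin n₁ → Bool) (l : Fin k → ℤ)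
    (W₁ : Matrix (Fin n₁) (Fin n₀) ℝ) (W₂ : Matrix (Fin n₂) (Fin n₁) ℝ) (p : Fin n₂) (q : Fin n₀) :
    combT A l W₁ W₂ p q = ∑ u, (combV A l u : ℝ) * (W₂ p u * W₁ u q) := by
  have key : ∀ i : Fin k, (W₂ * diagPat n₁ (A i) * W₁) p q
      = ∑ u, (if A i u then (1:ℝ) else 0) * (W₂ p u * W₁ u q) := by
    intro i
    rw [Matrix.mul_assoc, Matrix.mul_apply]
    refine Finset.sum_congr rfl fun u _ => ?_
    rw [show diagPat n₁ (A i) * W₁ = Matrix.of fun u q => (if A i u then (1:ℝ) else 0) * W₁ u q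
      from by ext u q; simp [diagPat, Matrix.diagonal_mul]]
    simp only [Matrix.of_apply]
    ring
  simp only [combT, Matrix.sum_apply, Matrix.smul_apply, smul_eq_mul, key, Finset.mul_sum]
  rw [Finset.sum_comm]
  refine Finset.sum_congr rfl fun u _ => ?_
  simp only [combV]
  push_cast
  rw [Finset.sum_mul]
  refine Finset.sum_congr rfl fun i _ => ?_
  ring

/-- Rank bound for block matrices of linear combinations of masked
matrices of a shallow ReLU network without biases. -/
theorem statement13 (n₀ n₁ n₂ k nn : ℕ) (hnn : 0 < nn)
    (A : Fin k → Fin n₁ → Bool) (lam : Fin nn → Fin k → ℤ)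
    (hcoef : ∀ u ∈ Finset.univ.inf (fun j : Fin nn => suppT A (lam j)),
      ∀ j j' : Fin nn, combV A (lam j) u = combV A (lam j') u)
    (α β : ℕ) (hα : 0 < α) (hβ : 0 < β)
    (f : Fin α × Fin β → Fin nn)
    (hf : ∀ p q : Fin α × Fin β, p ≠ q → f p = f q → p.1 = q.1 ∨ p.2 = q.2)
    (W₁ : Matrix (Fin n₁) (Fin n₀) ℝ) (W₂ : Matrix (Fin n₂) (Fin n₁) ℝ) :
    (Matrix.of fun (p : Fin α × Fin n₂) (q : Fin β × Fin n₀) =>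
        combT A (lam (f (p.1, q.1))) W₁ W₂ p.2 q.2).rank ≤
      (Finset.univ.inf (fun j : Fin nn => suppT A (lam j))).card +
        ∑ j : Fin nn,
          (suppT A (lam j) \ Finset.univ.inf (fun j' : Fin nn => suppT A (lam j'))).card := by
  classical
  set I : Finset (Fin n₁) := Finset.univ.inf (fun j : Fin nn => suppT A (lam j)) with hIdef
  -- each fiber of f lies in a single row or column; extract a rank-one factorization of
  -- its indicator matrix
  have hcross : ∀ j : Fin nn, ∃ (a : Fin α → ℝ) (b : Fin β → ℝ),
      ∀ p₁ q₁, a p₁ * b q₁ = if f (p₁, q₁) = j then 1 else 0 := by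
    intro j
    by_cases h : ∃ p q : Fin α × Fin β, f p = j ∧ f q = j ∧ p.1 ≠ q.1
    · obtain ⟨p, q, hp, hq, hne⟩ := h
      have hpq : p.2 = q.2 := by
        rcases hf p q (fun e => hne (by rw [e])) (hp.trans hq.symm) with h1 | h2
        · exact absurd h1 hne
        · exact h2
      have hall : ∀ s : Fin α × Fin β, f s = j → s.2 = p.2 := by
        intro s hs
        by_cases hsp : s = p
        · rw [hsp]
        rcases hf s p hsp (hs.trans hp.symm) with h1 | h2
        · have hsq : s ≠ q := by
            intro e
            exact hne (by rw [← h1, e])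
          rcases hf s q hsq (hs.trans hq.symm) with h3 | h4
          · exact absurd (h1 ▸ h3) (by simpa [h1] using hne)
          · exact h4.trans hpq.symm
        · exact h2
      refine ⟨fun p₁ => if f (p₁, p.2) = j then 1 else 0,
              fun q₁ => if q₁ = p.2 then 1 else 0, fun p₁ q₁ => ?_⟩
      by_cases hq₁ : q₁ = p.2
      · subst hq₁; simp
      · have hne' : f (p₁, q₁) ≠ j := fun e => hq₁ (hall _ e)
        simp [hq₁, hne']
    · push_neg at h
      by_cases h2 : ∃ p : Fin α × Fin β, f p = j
      · obtain ⟨p, hp⟩ := h2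
        refine ⟨fun p₁ => if p₁ = p.1 then 1 else 0,
                fun q₁ => if f (p.1, q₁) = j then 1 else 0, fun p₁ q₁ => ?_⟩
        by_cases hp₁ : p₁ = p.1
        · subst hp₁; simp
        · have hne' : f (p₁, q₁) ≠ j := fun e => hp₁ (h _ p e hp)
          simp [hp₁, hne']
      · push_neg at h2
        exact ⟨0, 0, fun p₁ q₁ => by simp [h2 (p₁, q₁)]⟩
  choose a b hab using hcross
  have hIle : ∀ j : Fin nn, I ⊆ suppT A (lam j) := fun j =>
    Finset.inf_le (Finset.mem_univ j)
  set j₀ : Fin nn := ⟨0, hnn⟩ with hj₀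
  -- factorization index type
  set B : Matrix (Fin α × Fin n₂)
      ({u // u ∈ I} ⊕ (Σ j : Fin nn, {u // u ∈ suppT A (lam j) \ I})) ℝ :=
    fun p s => Sum.elim (fun u => W₂ p.2 u.1)
      (fun ju => a ju.1 p.1 * W₂ p.2 ju.2.1) s with hB
  set C : Matrix ({u // u ∈ I} ⊕ (Σ j : Fin nn, {u // u ∈ suppT A (lam j) \ I}))
      (Fin β × Fin n₀) ℝ :=
    fun s q => Sum.elim (fun u => (combV A (lam j₀) u.1 : ℝ) * W₁ u.1 q.2)
      (fun ju => b ju.1 q.1 * ((combV A (lam ju.1) ju.2.1 : ℝ) * W₁ ju.2.1 q.2)) s with hC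
  have hM : (Matrix.of fun (p : Fin α × Fin n₂) (q : Fin β × Fin n₀) =>
        combT A (lam (f (p.1, q.1))) W₁ W₂ p.2 q.2) = B * C := by
    ext ⟨p₁, p₂⟩ ⟨q₁, q₂⟩
    rw [Matrix.mul_apply, Matrix.of_apply, combT_apply]
    set j₁ : Fin nn := f (p₁, q₁) with hj₁
    -- LHS : restrict to support, then split off I
    have hsupp : ∀ u : Fin n₁, u ∉ suppT A (lam j₁) →
        (combV A (lam j₁) u : ℝ) * (W₂ p₂ u * W₁ u q₂) = 0 := by
      intro u hu
      have : combV A (lam j₁) u = 0 := by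
        by_contra hne
        exact hu (Finset.mem_filter.2 ⟨Finset.mem_univ u, hne⟩)
      simp [this]
    rw [← Finset.sum_subset (Finset.subset_univ (suppT A (lam j₁)))
      (fun u _ hu => hsupp u hu)]
    rw [← Finset.sum_sdiff (hIle j₁)]
    -- RHS : split the sum over the sum type
    rw [Fintype.sum_sum_type]
    have hL : (∑ u : {u // u ∈ I},
        B (p₁, p₂) (Sum.inl u) * C (Sum.inl u) (q₁, q₂))
        = ∑ u ∈ I, (combV A (lam j₁) u : ℝ) * (W₂ p₂ u * W₁ u q₂) := by
      rw [← Finset.sum_coe_sort I]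
      refine Finset.sum_congr rfl fun u _ => ?_
      have := hcoef u.1 u.2 j₁ j₀
      simp only [hB, hC, Sum.elim_inl, ← this]
      ring
    have hR : (∑ ju : Σ j : Fin nn, {u // u ∈ suppT A (lam j) \ I},
        B (p₁, p₂) (Sum.inr ju) * C (Sum.inr ju) (q₁, q₂))
        = ∑ u ∈ suppT A (lam j₁) \ I,
            (combV A (lam j₁) u : ℝ) * (W₂ p₂ u * W₁ u q₂) := by
      rw [← Finset.univ_sigma_univ, Finset.sum_sigma]
      have hterm : ∀ j : Fin nn, (∑ u : {u // u ∈ suppT A (lam j) \ I},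
          B (p₁, p₂) (Sum.inr ⟨j, u⟩) * C (Sum.inr ⟨j, u⟩) (q₁, q₂))
          = if j₁ = j then
              ∑ u ∈ suppT A (lam j) \ I,
                (combV A (lam j) u : ℝ) * (W₂ p₂ u * W₁ u q₂)
            else 0 := by
        intro j
        have : (∑ u : {u // u ∈ suppT A (lam j) \ I},
            B (p₁, p₂) (Sum.inr ⟨j, u⟩) * C (Sum.inr ⟨j, u⟩) (q₁, q₂))
            = (a j p₁ * b j q₁) *
              ∑ u ∈ suppT A (lam j) \ I,
                (combV A (lam j) u : ℝ) * (W₂ p₂ u * W₁ u q₂) := by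
          rw [← Finset.sum_coe_sort (suppT A (lam j) \ I), Finset.mul_sum]
          refine Finset.sum_congr rfl fun u _ => ?_
          simp only [hB, hC, Sum.elim_inr]
          ring
        rw [this, hab j p₁ q₁]
        by_cases hj : f (p₁, q₁) = j
        · simp [hj, hj₁.trans hj]
        · rw [if_neg hj, if_neg (fun e : j₁ = j => hj (hj₁ ▸ e)), zero_mul]
      simp only [hterm]
      rw [Finset.sum_ite_eq]
      simp
    rw [hL, hR]
    ring
  rw [hM]
  calc (B * C).rank ≤ B.rank := Matrix.rank_mul_le_left B C
    _ ≤ Fintype.card ({u // u ∈ I} ⊕ (Σ j : Fin nn, {u // u ∈ suppT A (lam j) \ I})) :=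
        Matrix.rank_le_card_width B
    _ = I.card + ∑ j : Fin nn, (suppT A (lam j) \ I).card := by
        simp only [Fintype.card_sum, Fintype.card_sigma, Fintype.card_coe]
end
end

section
/- Let n_0 ≥ n_1 and n_1 ≤ n_2, let 0 ≤ s ≤ r_1, r_2 with r_1 + r_2 − s = n_1, and let A_1 ∈ {0,1}^{n_1} be the indicator vector of {1,…,r_1} and A_2 the indicator vector of {r_1−s+1,…,n_1}. Suppose W^(1), Y^(1) ∈ ℝ^{n_1×n_0} and W^(2), Y^(2) ∈ ℝ^{n_2×n_1} satisfy rank(W^(1)) = rank(Y^(1)) = rank(Y^(2)) = n_1 and W^(2)·diag(A_i)·W^(1) = Y^(2)·diag(A_i)·Y^(1) for i = 1, 2. Then there exists an invertible matrix Z ∈ GL_{n_1}(ℝ) with Y^(1) = Z·W^(1) which is block diagonal with respect to the partition {1,…,r_1−s}, {r_1−s+1,…,r_1}, {r_1+1,…,n_1}, i.e., Z_{uv} = 0 whenever u and v lie in different parts of this partition. -/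
noncomputable section

open Matrix

/-- The block index of a hidden neuron with respect to the partition
`{1,…,r₁−s}, {r₁−s+1,…,r₁}, {r₁+1,…,n₁}`. -/
def blockIdx (n₁ r₁ s : ℕ) (u : Fin n₁) : ℕ :=
  if u.1 < r₁ - s then 0 else if u.1 < r₁ then 1 else 2

/-- A square real matrix of full rank is invertible. -/
lemma full_rank_isUnit {n : ℕ} (M : Matrix (Fin n) (Fin n) ℝ) (h : M.rank = n) : IsUnit M := by
  have hsurj : Function.Surjective M.mulVecLin := by
    rw [← LinearMap.range_eq_top]
    apply Submodule.eq_top_of_finrank_eq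
    rw [show Module.finrank ℝ (LinearMap.range M.mulVecLin) = M.rank from rfl, h]
    simp
  choose g hg using hsurj
  refine (Matrix.isUnit_iff_isUnit_det _).mpr
    (Matrix.isUnit_det_of_right_inverse (B := Matrix.of fun i j => g (Pi.single j 1) i) ?_)
  ext i j
  have := congrFun (hg (Pi.single j 1)) i
  simp only [Matrix.mulVecLin_apply, Matrix.mulVec, dotProduct] at this
  simpa [Matrix.mul_apply, Matrix.one_apply, Pi.single_apply, eq_comm] using this

/-- Left multiplication by a 0/1 diagonal mask, entrywise. -/
lemma diagPat_mul {n m : ℕ} (A : Fin n → Bool) (W : Matrix (Fin n) (Fin m) ℝ) :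
    diagPat n A * W = Matrix.of (fun j v => if A j then W j v else 0) := by
  ext j v
  simp [diagPat, Matrix.diagonal_mul, ite_mul]

/-- Let `n_0 ≥ n_1`, `n_1 ≤ n_2`, `s ≤ r_1, r_2` with
`r_1 + r_2 − s = n_1`, let `A_1` be the indicator of the first `r_1` hidden neurons and
`A_2` the indicator of the last `r_2`.  If two full-rank parameter pairs produce the
same two masked matrices, then the change of basis `Z` with `Y^{(1)} = Z·W^{(1)}` exists,
is invertible, and is block diagonal for the partition
`{1,…,r_1−s}, {r_1−s+1,…,r_1}, {r_1+1,…,n_1}`. -/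
theorem statement16 (n₀ n₁ n₂ r₁ r₂ s : ℕ)
    (h₀ : n₁ ≤ n₀) (h₂ : n₁ ≤ n₂)
    (hs₁ : s ≤ r₁) (hs₂ : s ≤ r₂) (hfull : r₁ + r₂ - s = n₁)
    (W₁ Y₁ : Matrix (Fin n₁) (Fin n₀) ℝ) (W₂ Y₂ : Matrix (Fin n₂) (Fin n₁) ℝ)
    (hW₁ : W₁.rank = n₁) (hY₁ : Y₁.rank = n₁) (hY₂ : Y₂.rank = n₁)
    (heq₁ : W₂ * diagPat n₁ (fun j => decide (j.1 < r₁)) * W₁ =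
      Y₂ * diagPat n₁ (fun j => decide (j.1 < r₁)) * Y₁)
    (heq₂ : W₂ * diagPat n₁ (fun j => decide (r₁ - s ≤ j.1)) * W₁ =
      Y₂ * diagPat n₁ (fun j => decide (r₁ - s ≤ j.1)) * Y₁) :
    ∃ Z : Matrix (Fin n₁) (Fin n₁) ℝ,
      IsUnit Z ∧ Y₁ = Z * W₁ ∧
      ∀ u v : Fin n₁, blockIdx n₁ r₁ s u ≠ blockIdx n₁ r₁ s v → Z u v = 0 := by
  classical
  set D₁ : Matrix (Fin n₁) (Fin n₁) ℝ := diagPat n₁ (fun j => decide (j.1 < r₁)) with hD₁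
  set D₂ : Matrix (Fin n₁) (Fin n₁) ℝ := diagPat n₁ (fun j => decide (r₁ - s ≤ j.1)) with hD₂
  -- right cancellation by W₁
  have hGW : IsUnit (W₁ * W₁ᵀ) :=
    full_rank_isUnit _ (by rw [Matrix.rank_self_mul_transpose, hW₁])
  have cancel : ∀ C : Matrix (Fin n₁) (Fin n₁) ℝ, C * W₁ = 0 → C = 0 := by
    intro C hC
    have h1 : C * (W₁ * W₁ᵀ) = 0 := by rw [← Matrix.mul_assoc, hC, Matrix.zero_mul]
    have h2 := Matrix.mul_nonsing_inv (W₁ * W₁ᵀ) ((Matrix.isUnit_iff_isUnit_det _).mp hGW)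
    calc C = C * ((W₁ * W₁ᵀ) * (W₁ * W₁ᵀ)⁻¹) := by rw [h2, Matrix.mul_one]
      _ = 0 := by rw [← Matrix.mul_assoc, h1, Matrix.zero_mul]
  -- left inverse of Y₂
  have hGY : IsUnit (Y₂ᵀ * Y₂) :=
    full_rank_isUnit _ (by rw [Matrix.rank_transpose_mul_self, hY₂])
  set L : Matrix (Fin n₁) (Fin n₂) ℝ := (Y₂ᵀ * Y₂)⁻¹ * Y₂ᵀ with hL
  have hLY : L * Y₂ = 1 := by
    rw [hL, Matrix.mul_assoc, Matrix.nonsing_inv_mul _ ((Matrix.isUnit_iff_isUnit_det _).mp hGY)]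
  set B : Matrix (Fin n₁) (Fin n₁) ℝ := L * W₂ with hB
  have M1 : D₁ * Y₁ = B * (D₁ * W₁) := by
    calc D₁ * Y₁ = (L * Y₂) * (D₁ * Y₁) := by rw [hLY, Matrix.one_mul]
      _ = L * (Y₂ * D₁ * Y₁) := by rw [Matrix.mul_assoc L, ← Matrix.mul_assoc Y₂]
      _ = L * (W₂ * D₁ * W₁) := by rw [heq₁]
      _ = B * (D₁ * W₁) := by rw [hB, Matrix.mul_assoc L, ← Matrix.mul_assoc W₂]
  have M2 : D₂ * Y₁ = B * (D₂ * W₁) := by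
    calc D₂ * Y₁ = (L * Y₂) * (D₂ * Y₁) := by rw [hLY, Matrix.one_mul]
      _ = L * (Y₂ * D₂ * Y₁) := by rw [Matrix.mul_assoc L, ← Matrix.mul_assoc Y₂]
      _ = L * (W₂ * D₂ * W₁) := by rw [heq₂]
      _ = B * (D₂ * W₁) := by rw [hB, Matrix.mul_assoc L, ← Matrix.mul_assoc W₂]
  -- entrywise versions
  have e1 : ∀ u v, (if u.1 < r₁ then Y₁ u v else 0) =
      ∑ j, B u j * (if j.1 < r₁ then W₁ j v else 0) := by
    intro u v
    have h := congrFun (congrFun M1 u) v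
    rw [hD₁, diagPat_mul, diagPat_mul] at h
    simpa [Matrix.mul_apply] using h
  have e2 : ∀ u v, (if r₁ - s ≤ u.1 then Y₁ u v else 0) =
      ∑ j, B u j * (if r₁ - s ≤ j.1 then W₁ j v else 0) := by
    intro u v
    have h := congrFun (congrFun M2 u) v
    rw [hD₂, diagPat_mul, diagPat_mul] at h
    simpa [Matrix.mul_apply] using h
  -- Fact A: rows in block 0 vanish on columns ≥ r₁ - s
  have hzA : ∀ u v : Fin n₁, u.1 < r₁ - s → r₁ - s ≤ v.1 → B u v = 0 := by
    have hC : (Matrix.of fun u v : Fin n₁ =>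
        if u.1 < r₁ - s then (if r₁ - s ≤ v.1 then B u v else 0) else 0) = 0 := by
      apply cancel
      ext u v
      simp only [Matrix.mul_apply, Matrix.of_apply, Matrix.zero_apply]
      by_cases hu : u.1 < r₁ - s
      · simp only [hu, if_true]
        have : ∀ j : Fin n₁, (if r₁ - s ≤ j.1 then B u j else 0) * W₁ j v =
            B u j * (if r₁ - s ≤ j.1 then W₁ j v else 0) := by
          intro j; split <;> ring
        rw [Finset.sum_congr rfl (fun j _ => this j), ← e2 u v]
        simp [Nat.not_le.2 hu]
      · simp [hu]
    intro u v hu hv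
    have h := congrFun (congrFun hC u) v
    simp only [Matrix.of_apply, Matrix.zero_apply] at h
    rwa [if_pos hu, if_pos hv] at h
  -- Fact C: rows in block 2 vanish on columns < r₁
  have hzC : ∀ u v : Fin n₁, r₁ ≤ u.1 → v.1 < r₁ → B u v = 0 := by
    have hC : (Matrix.of fun u v : Fin n₁ =>
        if r₁ ≤ u.1 then (if v.1 < r₁ then B u v else 0) else 0) = 0 := by
      apply cancel
      ext u v
      simp only [Matrix.mul_apply, Matrix.of_apply, Matrix.zero_apply]
      by_cases hu : r₁ ≤ u.1
      · simp only [hu, if_true]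
        have : ∀ j : Fin n₁, (if j.1 < r₁ then B u j else 0) * W₁ j v =
            B u j * (if j.1 < r₁ then W₁ j v else 0) := by
          intro j; split <;> ring
        rw [Finset.sum_congr rfl (fun j _ => this j), ← e1 u v]
        simp [Nat.not_lt.2 hu]
      · simp [hu]
    intro u v hu hv
    have h := congrFun (congrFun hC u) v
    simp only [Matrix.of_apply, Matrix.zero_apply] at h
    rwa [if_pos hu, if_pos hv] at h
  -- Fact B: middle rows vanish outside the middle block
  have hzB : ∀ u v : Fin n₁, r₁ - s ≤ u.1 → u.1 < r₁ →
      (v.1 < r₁ - s ∨ r₁ ≤ v.1) → B u v = 0 := by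
    have hC : (Matrix.of fun u v : Fin n₁ =>
        if r₁ - s ≤ u.1 ∧ u.1 < r₁ then
          ((if v.1 < r₁ then (1:ℝ) else 0) - (if r₁ - s ≤ v.1 then (1:ℝ) else 0)) * B u v
        else 0) = 0 := by
      apply cancel
      ext u v
      simp only [Matrix.mul_apply, Matrix.of_apply, Matrix.zero_apply]
      by_cases hu : r₁ - s ≤ u.1 ∧ u.1 < r₁
      · have hstep : ∀ j : Fin n₁,
            (if r₁ - s ≤ u.1 ∧ u.1 < r₁ then
              ((if j.1 < r₁ then (1:ℝ) else 0) - (if r₁ - s ≤ j.1 then (1:ℝ) else 0)) * B u j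
            else 0) * W₁ j v =
            B u j * (if j.1 < r₁ then W₁ j v else 0)
              - B u j * (if r₁ - s ≤ j.1 then W₁ j v else 0) := by
          intro j
          rw [if_pos hu]
          split <;> split <;> ring
        rw [Finset.sum_congr rfl (fun j _ => hstep j), Finset.sum_sub_distrib,
          ← e1 u v, ← e2 u v, if_pos hu.2, if_pos hu.1, sub_self]
      · have hstep : ∀ j : Fin n₁,
            (if r₁ - s ≤ u.1 ∧ u.1 < r₁ then
              ((if j.1 < r₁ then (1:ℝ) else 0) - (if r₁ - s ≤ j.1 then (1:ℝ) else 0)) * B u j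
            else 0) * W₁ j v = 0 := by
          intro j; rw [if_neg hu, zero_mul]
        rw [Finset.sum_congr rfl (fun j _ => hstep j), Finset.sum_const_zero]
    intro u v hu1 hu2 hv
    have h := congrFun (congrFun hC u) v
    simp only [Matrix.of_apply, Matrix.zero_apply] at h
    rw [if_pos ⟨hu1, hu2⟩] at h
    rcases hv with hv | hv
    · have h1 : v.1 < r₁ := by omega
      have h2 : ¬ (r₁ - s ≤ v.1) := by omega
      rw [if_pos h1, if_neg h2, sub_zero, one_mul] at h
      exact h
    · have h1 : ¬ (v.1 < r₁) := by omega
      have h2 : r₁ - s ≤ v.1 := by omega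
      rw [if_neg h1, if_pos h2, zero_sub] at h
      linarith [h]
  -- Y₁ = B * W₁
  have hYB : Y₁ = B * W₁ := by
    ext u v
    rcases Nat.lt_or_ge u.1 r₁ with hu | hu
    · have h := e1 u v
      rw [if_pos hu] at h
      rw [h, Matrix.mul_apply]
      apply Finset.sum_congr rfl
      intro j _
      rcases Nat.lt_or_ge j.1 r₁ with hj | hj
      · rw [if_pos hj]
      · have hB0 : B u j = 0 := by
          rcases Nat.lt_or_ge u.1 (r₁ - s) with hu' | hu'
          · exact hzA u j hu' (by omega)
          · exact hzB u j hu' hu (Or.inr hj)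
        simp [hB0]
    · have h := e2 u v
      rw [if_pos (by omega : r₁ - s ≤ u.1)] at h
      rw [h, Matrix.mul_apply]
      apply Finset.sum_congr rfl
      intro j _
      rcases Nat.lt_or_ge j.1 (r₁ - s) with hj | hj
      · have hB0 : B u j = 0 := hzC u j hu (by omega)
        simp [hB0, Nat.not_le.2 hj]
      · rw [if_pos hj]
  -- B is invertible
  have hBunit : IsUnit B := by
    apply full_rank_isUnit
    have hle : B.rank ≤ n₁ := by
      simpa using Matrix.rank_le_card_width B
    have hge : n₁ ≤ B.rank := by
      calc n₁ = Y₁.rank := hY₁.symm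
        _ = (B * W₁).rank := by rw [hYB]
        _ ≤ B.rank := Matrix.rank_mul_le_left B W₁
    omega
  refine ⟨B, hBunit, hYB, ?_⟩
  intro u v huv
  unfold blockIdx at huv
  rcases Nat.lt_or_ge u.1 (r₁ - s) with hu | hu
  · rcases Nat.lt_or_ge v.1 (r₁ - s) with hv | hv
    · simp [hu, hv] at huv
    · exact hzA u v hu hv
  · rcases Nat.lt_or_ge u.1 r₁ with hu' | hu'
    · rcases Nat.lt_or_ge v.1 (r₁ - s) with hv | hv
      · exact hzB u v hu hu' (Or.inl hv)
      · rcases Nat.lt_or_ge v.1 r₁ with hv' | hv'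
        · simp [Nat.not_lt.2 hu, hu', Nat.not_lt.2 hv, hv'] at huv
        · exact hzB u v hu hu' (Or.inr hv')
    · rcases Nat.lt_or_ge v.1 r₁ with hv | hv
      · exact hzC u v hu' hv
      · have h1 : ¬ u.1 < r₁ - s := by omega
        have h2 : ¬ v.1 < r₁ - s := by omega
        simp [h1, h2, Nat.not_lt.2 hu', Nat.not_lt.2 hv] at huv
end
end
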